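/- In the group algebra ℤ[D_n] (n ≥ 4), the product Φ_2 Φ_3 ⋯ Φ_n equals the sum of all elements of D_n, where Φ_j = 1 + ∑_{−j ≤ i < j} t_{ij}. -/

import Mathlib

/-- The signed transposition `t_{ij}` of `ℤ`, exchanging `i ↔ j` and `-i ↔ -j`
(when `i = -j` this is the sign change negating `j`). -/
def bt (i j : ℤ) : Equiv.Perm ℤ :=
  if i = -j then Equiv.swap i j else Equiv.swap i j * Equiv.swap (-i) (-j)

/-- The type D transposition `t_{ij}`: for `i ≠ -j` it is the signed transposition
exchanging `i ↔ j` and `-i ↔ -j`; for `i = -j` it is the double sign change negating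
the letters `1` and `j` (so `t_{-1,1} = 1`). -/
def dt (i j : ℤ) : Equiv.Perm ℤ :=
  if i = -j then Equiv.swap (-1 : ℤ) 1 * Equiv.swap (-j) j else bt i j

/-- `w` is a signed permutation in the hyperoctahedral group `B_n`. -/
def IsSignedPerm (n : ℕ) (w : Equiv.Perm ℤ) : Prop :=
  (∀ x : ℤ, w (-x) = -w x) ∧ ∀ x : ℤ, (n : ℤ) < |x| → w x = x

/-- `N(w)`: the number of negative entries among `w(1), …, w(n)`. -/
noncomputable def NB (n : ℕ) (w : Equiv.Perm ℤ) : ℕ :=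
  ((Finset.Icc (1 : ℤ) (n : ℤ)).filter fun i => w i < 0).card

/-- The Coxeter group `D_n`: signed permutations with an even number of negative
entries. -/
def DSet (n : ℕ) : Set (Equiv.Perm ℤ) :=
  {w | IsSignedPerm n w ∧ Even (NB n w)}

/-- `Φ_j = 1 + ∑_{-j ≤ i < j, i ≠ 0} t_{ij} ∈ ℤ[D_n]`. -/
noncomputable def phiD (j : ℕ) : MonoidAlgebra ℤ (Equiv.Perm ℤ) :=
  1 + ∑ i ∈ (Finset.Icc (-(j : ℤ)) ((j : ℤ) - 1)).erase 0,
      MonoidAlgebra.of ℤ (Equiv.Perm ℤ) (dt i (j : ℤ))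

noncomputable def Idx (j : ℕ) : Finset ℤ := (Finset.Icc (-(j : ℤ)) ((j : ℤ) - 1)).erase 0

lemma Equiv.Perm.apply_inv_self (w : Equiv.Perm ℤ) (x : ℤ) : w (w⁻¹ x) = x :=
  Equiv.apply_symm_apply w x

lemma Equiv.Perm.inv_apply_self (w : Equiv.Perm ℤ) (x : ℤ) : w⁻¹ (w x) = x :=
  Equiv.symm_apply_apply w x

lemma mem_Idx {j : ℕ} {i : ℤ} (h : i ∈ Idx j) : i ≠ 0 ∧ -(j:ℤ) ≤ i ∧ i ≤ (j:ℤ) - 1 := by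
  simp only [Idx, Finset.mem_erase, Finset.mem_Icc] at h
  exact ⟨h.1, h.2.1, h.2.2⟩

lemma dt_apply' (i j x : ℤ) (hj : 2 ≤ j) (hi : i ≠ 0) (hli : -j ≤ i) (hui : i ≤ j - 1) :
    dt i j x =
      if i = -j then (if x = 1 then -1 else if x = -1 then 1 else if x = j then -j
        else if x = -j then j else x)
      else (if x = i then j else if x = j then i else if x = -i then -j
        else if x = -j then -i else x) := by
  by_cases h : i = -j
  · rw [dt, if_pos h, if_pos h]
    simp only [Equiv.Perm.mul_apply, Equiv.swap_apply_def]
    split_ifs <;> first | omega | simp_all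
  · rw [dt, if_neg h, if_neg h, bt, if_neg h]
    simp only [Equiv.Perm.mul_apply, Equiv.swap_apply_def]
    split_ifs <;> first | omega | simp_all

lemma dt_self {j : ℕ} {i : ℤ} (hj : 2 ≤ j) (h : i ∈ Idx j) : dt i (j:ℤ) (j:ℤ) = i := by
  obtain ⟨h0, h1, h2⟩ := mem_Idx h
  have hj' : (2:ℤ) ≤ (j:ℤ) := by exact_mod_cast hj
  rw [dt_apply' i j j hj' h0 h1 h2]
  split_ifs <;> first | omega | simp_all

lemma dt_invol {j : ℕ} {i : ℤ} (hj : 2 ≤ j) (h : i ∈ Idx j) : dt i (j:ℤ) * dt i (j:ℤ) = 1 := by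
  obtain ⟨h0, h1, h2⟩ := mem_Idx h
  have hj' : (2:ℤ) ≤ (j:ℤ) := by exact_mod_cast hj
  ext x
  obtain ⟨y, hy⟩ : ∃ y, dt i (j:ℤ) x = y := ⟨_, rfl⟩
  rw [Equiv.Perm.mul_apply, Equiv.Perm.one_apply, hy, dt_apply' i j y hj' h0 h1 h2]
  rw [dt_apply' i j x hj' h0 h1 h2] at hy
  split_ifs at hy ⊢ <;> first | omega | simp_all

lemma dt_signed {j : ℕ} {i : ℤ} (hj : 2 ≤ j) (h : i ∈ Idx j) : IsSignedPerm j (dt i (j:ℤ)) := by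
  obtain ⟨h0, h1, h2⟩ := mem_Idx h
  have hj' : (2:ℤ) ≤ (j:ℤ) := by exact_mod_cast hj
  constructor
  · intro x
    rw [dt_apply' i j (-x) hj' h0 h1 h2, dt_apply' i j x hj' h0 h1 h2]
    split_ifs <;> first | omega | simp_all
  · intro x hx
    rw [lt_abs] at hx
    rw [dt_apply' i j x hj' h0 h1 h2]
    split_ifs <;> first | omega | simp_all

lemma signed_one (n : ℕ) : IsSignedPerm n 1 := ⟨fun x => rfl, fun x _ => rfl⟩

lemma signed_mul {n : ℕ} {u v : Equiv.Perm ℤ} (hu : IsSignedPerm n u) (hv : IsSignedPerm n v) :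
    IsSignedPerm n (u * v) := by
  constructor
  · intro x; rw [Equiv.Perm.mul_apply, Equiv.Perm.mul_apply, hv.1, hu.1]
  · intro x hx; rw [Equiv.Perm.mul_apply, hv.2 x hx, hu.2 x hx]

lemma signed_mono {n m : ℕ} (h : n ≤ m) {w : Equiv.Perm ℤ} (hw : IsSignedPerm n w) :
    IsSignedPerm m w :=
  ⟨hw.1, fun x hx => hw.2 x (lt_of_le_of_lt (by exact_mod_cast h) hx)⟩

lemma signed_inv {n : ℕ} {w : Equiv.Perm ℤ} (hw : IsSignedPerm n w) : IsSignedPerm n w⁻¹ := by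
  constructor
  · intro x
    apply w.injective
    rw [Equiv.Perm.apply_inv_self, hw.1, Equiv.Perm.apply_inv_self]
  · intro x hx
    apply w.injective
    rw [Equiv.Perm.apply_inv_self, hw.2 x hx]

lemma signed_zero {n : ℕ} {w : Equiv.Perm ℤ} (hw : IsSignedPerm n w) : w 0 = 0 := by
  have := hw.1 0
  simp at this
  omega

lemma signed_ne_zero {n : ℕ} {w : Equiv.Perm ℤ} (hw : IsSignedPerm n w) {x : ℤ} (hx : x ≠ 0) :
    w x ≠ 0 := by
  intro h
  exact hx (w.injective (h.trans (signed_zero hw).symm))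

lemma signed_maps {n : ℕ} {w : Equiv.Perm ℤ} (hw : IsSignedPerm n w) {x : ℤ}
    (hx : |x| ≤ n) : |w x| ≤ n := by
  by_contra h
  push_neg at h
  have h2 := hw.2 (w x) h
  have h3 := w.injective h2
  rw [h3] at h
  exact absurd h (not_lt.mpr hx)

lemma signed_down {n : ℕ} {w : Equiv.Perm ℤ} (hw : IsSignedPerm (n+1) w)
    (hfix : w ((n:ℤ)+1) = (n:ℤ)+1) : IsSignedPerm n w := by
  refine ⟨hw.1, ?_⟩
  intro x hx
  by_cases h : ((n:ℤ)+1) < |x|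
  · exact hw.2 x (by push_cast; exact h)
  · push_neg at h
    have habs : |x| = (n:ℤ)+1 := le_antisymm h (by omega)
    rcases (abs_eq (by positivity)).mp habs with h1 | h1
    · rw [h1]; exact hfix
    · rw [h1, show -((n:ℤ)+1) = -(((n:ℤ)+1)) from rfl, hw.1, hfix]

noncomputable def eps (m : ℕ) (w : Equiv.Perm ℤ) : ℤ :=
  ∏ k ∈ Finset.Icc (1:ℤ) (m:ℤ), (if w k < 0 then (-1:ℤ) else 1)

lemma eps_eq_pow (m : ℕ) (w : Equiv.Perm ℤ) : eps m w = (-1) ^ (NB m w) := by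
  rw [eps, NB, ← Finset.prod_filter_mul_prod_filter_not _ (fun i => w i < 0)]
  rw [Finset.prod_congr rfl (fun x hx => if_pos (Finset.mem_filter.mp hx).2),
    Finset.prod_congr rfl (fun x hx => if_neg (Finset.mem_filter.mp hx).2),
    Finset.prod_const, Finset.prod_const, one_pow, mul_one]

lemma eps_eq_one_iff (m : ℕ) (w : Equiv.Perm ℤ) : eps m w = 1 ↔ Even (NB m w) := by
  rw [eps_eq_pow]
  constructor
  · intro h
    by_contra hodd
    rw [Nat.not_even_iff_odd] at hodd
    rw [hodd.neg_one_pow] at h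
    norm_num at h
  · intro h; exact h.neg_one_pow

lemma eps_one (m : ℕ) : eps m 1 = 1 := by
  rw [eps]
  apply Finset.prod_eq_one
  intro k hk
  rw [Finset.mem_Icc] at hk
  rw [Equiv.Perm.one_apply, if_neg (by omega)]

lemma eps_mul {m : ℕ} {u v : Equiv.Perm ℤ} (hu : IsSignedPerm m u) (hv : IsSignedPerm m v) :
    eps m (u * v) = eps m u * eps m v := by
  have key : ∀ k ∈ Finset.Icc (1:ℤ) (m:ℤ),
      (if (u * v) k < 0 then (-1:ℤ) else 1)
        = (if v k < 0 then (-1:ℤ) else 1) * (if u |v k| < 0 then (-1:ℤ) else 1) := by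
    intro k hk
    rw [Finset.mem_Icc] at hk
    have hk0 : k ≠ 0 := by omega
    have hv0 : v k ≠ 0 := signed_ne_zero hv hk0
    rw [Equiv.Perm.mul_apply]
    rcases lt_or_gt_of_ne hv0 with hneg | hpos
    · have habs : |v k| = -(v k) := abs_of_neg hneg
      have hu0 : u (v k) ≠ 0 := signed_ne_zero hu hv0
      have : u |v k| = -(u (v k)) := by rw [habs, hu.1]
      rw [this]
      split_ifs <;> first | omega | simp_all
    · have habs : |v k| = v k := abs_of_pos hpos
      rw [habs]
      split_ifs <;> first | omega | simp_all
  rw [eps, Finset.prod_congr rfl key, Finset.prod_mul_distrib, mul_comm (eps m u) (eps m v)]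
  congr 1
  show _ = ∏ k ∈ Finset.Icc (1:ℤ) (m:ℤ), (if u k < 0 then (-1:ℤ) else 1)
  refine Finset.prod_nbij' (fun k => |v k|) (fun k => |v⁻¹ k|) ?_ ?_ ?_ ?_ ?_
  · intro k hk
    show |v k| ∈ Finset.Icc (1:ℤ) (m:ℤ)
    rw [Finset.mem_Icc] at hk ⊢
    have hk0 : k ≠ 0 := by omega
    have h1 : v k ≠ 0 := signed_ne_zero hv hk0
    have h2 : |v k| ≤ (m:ℤ) := signed_maps hv (by rw [abs_le]; omega)
    have h3 := le_abs_self (v k)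
    have h4 := neg_abs_le (v k)
    omega
  · intro k hk
    show |v⁻¹ k| ∈ Finset.Icc (1:ℤ) (m:ℤ)
    rw [Finset.mem_Icc] at hk ⊢
    have hk0 : k ≠ 0 := by omega
    have h1 : v⁻¹ k ≠ 0 := signed_ne_zero (signed_inv hv) hk0
    have h2 : |v⁻¹ k| ≤ (m:ℤ) := signed_maps (signed_inv hv) (by rw [abs_le]; omega)
    have h3 := le_abs_self (v⁻¹ k)
    have h4 := neg_abs_le (v⁻¹ k)
    omega
  · intro k hk
    rw [Finset.mem_Icc] at hk
    show |v⁻¹ (|v k|)| = k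
    rcases le_or_gt 0 (v k) with h | h
    · rw [abs_of_nonneg h, Equiv.Perm.inv_apply_self, abs_of_nonneg (by omega)]
    · rw [abs_of_neg h, (signed_inv hv).1, Equiv.Perm.inv_apply_self, abs_neg,
        abs_of_nonneg (by omega)]
  · intro k hk
    rw [Finset.mem_Icc] at hk
    show |v (|v⁻¹ k|)| = k
    rcases le_or_gt 0 (v⁻¹ k) with h | h
    · rw [abs_of_nonneg h, Equiv.Perm.apply_inv_self, abs_of_nonneg (by omega)]
    · rw [abs_of_neg h, hv.1, Equiv.Perm.apply_inv_self, abs_neg, abs_of_nonneg (by omega)]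
  · intro k _
    rfl

lemma Icc_succ (m : ℕ) : Finset.Icc (1:ℤ) ((m:ℤ)+1) = insert ((m:ℤ)+1) (Finset.Icc 1 (m:ℤ)) := by
  ext k
  simp only [Finset.mem_Icc, Finset.mem_insert]
  omega

lemma eps_succ {m : ℕ} {w : Equiv.Perm ℤ} (hpos : ¬ w ((m:ℤ)+1) < 0) :
    eps (m+1) w = eps m w := by
  rw [eps, eps, show ((m+1:ℕ):ℤ) = (m:ℤ)+1 by push_cast; ring, Icc_succ,
    Finset.prod_insert (by simp), if_neg hpos, one_mul]

lemma NB_succ {m : ℕ} {w : Equiv.Perm ℤ} (hpos : ¬ w ((m:ℤ)+1) < 0) :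
    NB (m+1) w = NB m w := by
  rw [NB, NB, show ((m+1:ℕ):ℤ) = (m:ℤ)+1 by push_cast; ring, Icc_succ,
    Finset.filter_insert, if_neg hpos]

lemma dt_even {j : ℕ} {i : ℤ} (hj : 2 ≤ j) (h : i ∈ Idx j) : Even (NB j (dt i (j:ℤ))) := by
  obtain ⟨h0, h1, h2⟩ := mem_Idx h
  have hj' : (2:ℤ) ≤ (j:ℤ) := by exact_mod_cast hj
  rcases h0.lt_or_gt with hneg | hpos
  · by_cases hij : i = -(j:ℤ)
    · have hfil : (Finset.Icc (1:ℤ) (j:ℤ)).filter (fun k => dt i (j:ℤ) k < 0)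
          = {1, (j:ℤ)} := by
        ext k
        simp only [Finset.mem_filter, Finset.mem_Icc, Finset.mem_insert, Finset.mem_singleton]
        rw [dt_apply' i j k hj' h0 h1 h2]
        split_ifs <;> first | omega | simp_all
      rw [NB, hfil, Finset.card_insert_of_notMem (by simp; omega), Finset.card_singleton]
      exact even_two
    · have hfil : (Finset.Icc (1:ℤ) (j:ℤ)).filter (fun k => dt i (j:ℤ) k < 0)
          = {-i, (j:ℤ)} := by
        ext k
        simp only [Finset.mem_filter, Finset.mem_Icc, Finset.mem_insert, Finset.mem_singleton]
        rw [dt_apply' i j k hj' h0 h1 h2]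
        split_ifs <;> first | omega | simp_all
      rw [NB, hfil, Finset.card_insert_of_notMem (by simp; omega), Finset.card_singleton]
      exact even_two
  · have hfil : (Finset.Icc (1:ℤ) (j:ℤ)).filter (fun k => dt i (j:ℤ) k < 0) = ∅ := by
      apply Finset.filter_eq_empty_iff.mpr
      intro k hk
      rw [Finset.mem_Icc] at hk
      rw [dt_apply' i j k hj' h0 h1 h2]
      split_ifs <;> first | omega | simp_all
    rw [NB, hfil, Finset.card_empty]
    exact Even.zero

lemma dt_eps {j : ℕ} {i : ℤ} (hj : 2 ≤ j) (h : i ∈ Idx j) : eps j (dt i (j:ℤ)) = 1 :=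
  (eps_eq_one_iff _ _).mpr (dt_even hj h)

noncomputable instance : DecidableEq (Equiv.Perm ℤ) := Classical.decEq _

noncomputable def TF (j : ℕ) : Finset (Equiv.Perm ℤ) :=
  insert 1 ((Idx j).image fun i => dt i (j:ℤ))

lemma one_not_mem_image {j : ℕ} (hj : 2 ≤ j) :
    (1 : Equiv.Perm ℤ) ∉ (Idx j).image fun i => dt i (j:ℤ) := by
  intro hmem
  obtain ⟨i, hi, hdt⟩ := Finset.mem_image.mp hmem
  have h1 : dt i (j:ℤ) (j:ℤ) = (1 : Equiv.Perm ℤ) (j:ℤ) := by rw [hdt]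
  rw [dt_self hj hi, Equiv.Perm.one_apply] at h1
  obtain ⟨-, -, h2⟩ := mem_Idx hi
  omega

lemma phiD_eq {j : ℕ} (hj : 2 ≤ j) :
    phiD j = ∑ t ∈ TF j, MonoidAlgebra.of ℤ (Equiv.Perm ℤ) t := by
  rw [TF, Finset.sum_insert (one_not_mem_image hj), Finset.sum_image, map_one, phiD, Idx]
  intro x hx y hy hxy
  have h1 : dt x (j:ℤ) (j:ℤ) = dt y (j:ℤ) (j:ℤ) := by rw [show dt x (j:ℤ) = dt y (j:ℤ) from hxy]
  rwa [dt_self hj hx, dt_self hj hy] at h1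

lemma TF_signed {j : ℕ} (hj : 2 ≤ j) {t : Equiv.Perm ℤ} (ht : t ∈ TF j) : IsSignedPerm j t := by
  rcases Finset.mem_insert.mp ht with h | h
  · rw [h]; exact signed_one j
  · obtain ⟨i, hi, hdt⟩ := Finset.mem_image.mp h
    rw [← hdt]; exact dt_signed hj hi

lemma TF_invol {j : ℕ} (hj : 2 ≤ j) {t : Equiv.Perm ℤ} (ht : t ∈ TF j) : t * t = 1 := by
  rcases Finset.mem_insert.mp ht with h | h
  · rw [h, mul_one]
  · obtain ⟨i, hi, hdt⟩ := Finset.mem_image.mp h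
    rw [← hdt]; exact dt_invol hj hi

lemma TF_eps {j : ℕ} (hj : 2 ≤ j) {t : Equiv.Perm ℤ} (ht : t ∈ TF j) : eps j t = 1 := by
  rcases Finset.mem_insert.mp ht with h | h
  · rw [h]; exact eps_one j
  · obtain ⟨i, hi, hdt⟩ := Finset.mem_image.mp h
    rw [← hdt]; exact dt_eps hj hi

lemma TF_inj {j : ℕ} (hj : 2 ≤ j) {t t' : Equiv.Perm ℤ} (ht : t ∈ TF j) (ht' : t' ∈ TF j)
    (h : t (j:ℤ) = t' (j:ℤ)) : t = t' := by
  have key : ∀ s ∈ TF j, ∀ s' ∈ TF j, s (j:ℤ) = s' (j:ℤ) → s = s' → True := fun _ _ _ _ _ _ => trivial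
  clear key
  rcases Finset.mem_insert.mp ht with h1 | h1 <;> rcases Finset.mem_insert.mp ht' with h2 | h2
  · rw [h1, h2]
  · exfalso
    obtain ⟨i, hi, hdt⟩ := Finset.mem_image.mp h2
    rw [h1, ← hdt, Equiv.Perm.one_apply, dt_self hj hi] at h
    obtain ⟨-, -, h3⟩ := mem_Idx hi
    omega
  · exfalso
    obtain ⟨i, hi, hdt⟩ := Finset.mem_image.mp h1
    rw [h2, ← hdt, Equiv.Perm.one_apply, dt_self hj hi] at h
    obtain ⟨-, -, h3⟩ := mem_Idx hi
    omega
  · obtain ⟨i, hi, hdt⟩ := Finset.mem_image.mp h1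
    obtain ⟨i', hi', hdt'⟩ := Finset.mem_image.mp h2
    rw [← hdt, ← hdt'] at h ⊢
    rw [dt_self hj hi, dt_self hj hi'] at h
    rw [h]

lemma Idx_one : Idx 1 = {-1} := by
  ext x
  simp only [Idx, Finset.mem_erase, Finset.mem_Icc, Finset.mem_singleton]
  push_cast
  omega

lemma TF_one : TF 1 = {1} := by
  rw [TF, Idx_one]
  have e1 : ((1:ℕ):ℤ) = 1 := by norm_num
  have hdt1 : dt (-1) ((1:ℕ):ℤ) = 1 := by
    rw [e1, dt, if_pos (show (-1:ℤ) = -1 by norm_num)]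
    exact Equiv.swap_mul_self (-1) 1
  rw [Finset.image_singleton, hdt1]
  exact Finset.insert_eq_self.mpr (Finset.mem_singleton_self _)

noncomputable def DF : ℕ → Finset (Equiv.Perm ℤ)
  | 0 => {1}
  | (m+1) => ((DF m) ×ˢ TF (m+1)).image fun p => p.1 * p.2

lemma DF_signed : ∀ (m : ℕ), ∀ u ∈ DF m, IsSignedPerm m u := by
  intro m
  induction m with
  | zero =>
    intro u hu
    rw [DF, Finset.mem_singleton] at hu
    rw [hu]; exact signed_one 0
  | succ m ih =>
    intro u hu
    rw [DF] at hu
    obtain ⟨p, hp, hmul⟩ := Finset.mem_image.mp hu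
    rw [Finset.mem_product] at hp
    rw [← hmul]
    rcases Nat.eq_zero_or_pos m with hm | hm
    · subst hm
      have hT1 : p.2 = 1 := by
        have h := hp.2
        rw [show (0+1 : ℕ) = 1 from rfl, TF_one, Finset.mem_singleton] at h
        exact h
      have h1 : p.1 = 1 := by
        have := hp.1
        rwa [DF, Finset.mem_singleton] at this
      rw [hT1, h1, mul_one]
      exact signed_one 1
    · have h2 : 2 ≤ m + 1 := by omega
      exact signed_mul (signed_mono (Nat.le_succ m) (ih p.1 hp.1)) (TF_signed h2 hp.2)

lemma DF_one : DF 1 = {1} := by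
  rw [show (1:ℕ) = 0+1 from rfl, DF, DF, TF_one]
  simp

lemma DF_fix {m : ℕ} {u : Equiv.Perm ℤ} (hu : u ∈ DF m) : u ((m:ℤ)+1) = (m:ℤ)+1 :=
  (DF_signed m u hu).2 _ (by rw [abs_of_nonneg (by positivity)]; omega)

lemma DF_even : ∀ (m : ℕ), ∀ u ∈ DF m, eps m u = 1 := by
  intro m
  induction m with
  | zero =>
    intro u hu
    rw [DF, Finset.mem_singleton] at hu
    rw [hu]; exact eps_one 0
  | succ m ih =>
    intro u hu
    rcases Nat.eq_zero_or_pos m with hm | hm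
    · subst hm
      rw [show (0+1:ℕ) = 1 from rfl, DF_one, Finset.mem_singleton] at hu
      rw [hu]; exact eps_one 1
    · have h2 : 2 ≤ m + 1 := by omega
      rw [DF] at hu
      obtain ⟨p, hp, hmul⟩ := Finset.mem_image.mp hu
      rw [Finset.mem_product] at hp
      have hs1 : IsSignedPerm (m+1) p.1 := signed_mono (Nat.le_succ m) (DF_signed m p.1 hp.1)
      rw [← hmul, eps_mul hs1 (TF_signed h2 hp.2), TF_eps h2 hp.2, mul_one,
        eps_succ (by rw [DF_fix hp.1]; omega), ih p.1 hp.1]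

lemma pair_inj {m : ℕ} :
    ∀ p ∈ (DF (m+1)) ×ˢ TF (m+2), ∀ q ∈ (DF (m+1)) ×ˢ TF (m+2),
      p.1 * p.2 = q.1 * q.2 → p = q := by
  have h2 : 2 ≤ m + 2 := by omega
  have key : ∀ r ∈ (DF (m+1)) ×ˢ TF (m+2), (r.1 * r.2)⁻¹ (((m+2:ℕ)):ℤ) = r.2 (((m+2:ℕ)):ℤ) := by
    intro r hr
    rw [Finset.mem_product] at hr
    rw [mul_inv_rev, Equiv.Perm.mul_apply]
    have hfix : r.1 (((m+2:ℕ)):ℤ) = (((m+2:ℕ)):ℤ) :=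
      (DF_signed (m+1) r.1 hr.1).2 _ (by rw [abs_of_nonneg (by positivity)]; push_cast; omega)
    have hinv1 : r.1⁻¹ (((m+2:ℕ)):ℤ) = (((m+2:ℕ)):ℤ) := by
      apply r.1.injective
      rw [Equiv.Perm.apply_inv_self, hfix]
    rw [hinv1, inv_eq_of_mul_eq_one_right (TF_invol h2 hr.2)]
  intro p hp q hq heq
  have h1 : p.2 (((m+2:ℕ)):ℤ) = q.2 (((m+2:ℕ)):ℤ) := by
    rw [← key p hp, ← key q hq, heq]
  rw [Finset.mem_product] at hp hq
  have h2' : p.2 = q.2 := TF_inj h2 hp.2 hq.2 h1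
  have h3 : p.1 = q.1 := by
    rw [h2'] at heq
    exact mul_right_cancel heq
  exact Prod.ext h3 h2'

lemma prod_phi : ∀ (m : ℕ), ((List.range m).map fun j => phiD (j+2)).prod
    = ∑ w ∈ DF (m+1), MonoidAlgebra.of ℤ (Equiv.Perm ℤ) w := by
  intro m
  induction m with
  | zero =>
    rw [show (0+1:ℕ) = 1 from rfl, DF_one]
    simp [MonoidAlgebra.one_def]
  | succ m ih =>
    rw [List.range_succ, List.map_append, List.prod_append, List.map_cons, List.map_nil,
      List.prod_cons, List.prod_nil, mul_one, ih, phiD_eq (show 2 ≤ m+2 by omega),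
      Finset.sum_mul_sum]
    have step : ∀ u ∈ DF (m+1), ∀ t ∈ TF (m+2),
        (MonoidAlgebra.of ℤ (Equiv.Perm ℤ) u) * (MonoidAlgebra.of ℤ (Equiv.Perm ℤ) t)
          = MonoidAlgebra.of ℤ (Equiv.Perm ℤ) (u * t) := fun _ _ _ _ => (map_mul _ _ _).symm
    rw [Finset.sum_congr rfl fun u hu => Finset.sum_congr rfl fun t ht => step u hu t ht,
      ← Finset.sum_product']
    conv_rhs => rw [DF]
    rw [Finset.sum_image pair_inj]

lemma DSet_subset_DF : ∀ (m : ℕ), ∀ w : Equiv.Perm ℤ,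
    IsSignedPerm m w → Even (NB m w) → w ∈ DF m := by
  intro m
  induction m with
  | zero =>
    intro w hw _
    rw [DF, Finset.mem_singleton]
    ext x
    rcases eq_or_ne x 0 with h | h
    · rw [h, signed_zero hw, Equiv.Perm.one_apply]
    · rw [Equiv.Perm.one_apply]
      exact hw.2 x (by push_cast; exact abs_pos.mpr h)
  | succ m ih =>
    intro w hw he
    set i := w⁻¹ ((m:ℤ)+1) with hidef
    have hwi : w i = (m:ℤ)+1 := Equiv.Perm.apply_inv_self w _
    have hi0 : i ≠ 0 := by
      intro h
      rw [h, signed_zero hw] at hwi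
      omega
    have hibd : |i| ≤ (m:ℤ)+1 := by
      by_contra hc
      push_neg at hc
      have hfix := hw.2 i (by push_cast; exact hc)
      rw [hfix] at hwi
      rw [hwi, abs_of_nonneg (by positivity)] at hc
      omega
    have hia := le_abs_self i
    have hia' := neg_abs_le i
    by_cases hcase : i = (m:ℤ)+1
    · have hfix : w ((m:ℤ)+1) = (m:ℤ)+1 := by rw [← hcase, hwi, hcase]
      have hs : IsSignedPerm m w := signed_down hw hfix
      have he' : Even (NB m w) := by rwa [NB_succ (by rw [hfix]; omega)] at he
      rw [DF]
      exact Finset.mem_image.mpr ⟨(w, 1),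
        Finset.mem_product.mpr ⟨ih w hs he', Finset.mem_insert_self _ _⟩, mul_one w⟩
    · have hm : 1 ≤ m := by
        by_contra h0
        have hm0 : m = 0 := by omega
        subst hm0
        have hi : i = -1 := by omega
        have hw1 : w 1 = -1 := by
          have h' := hw.1 i
          rw [hwi, hi] at h'
          norm_num at h'
          exact h'
        have hNB : NB (0+1) w = 1 := by
          rw [NB, show (((0+1:ℕ)):ℤ) = 1 by norm_num, Finset.Icc_self, Finset.filter_singleton,
            if_pos (by rw [hw1]; omega), Finset.card_singleton]
        rw [hNB] at he
        exact (Nat.not_even_iff_odd.mpr odd_one) he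
      have h2 : 2 ≤ m + 1 := by omega
      have hiIdx : i ∈ Idx (m+1) := by
        simp only [Idx, Finset.mem_erase, Finset.mem_Icc]
        push_cast
        omega
      set t := dt i (((m+1:ℕ)):ℤ) with htdef
      have ht : t ∈ TF (m+1) := Finset.mem_insert_of_mem (Finset.mem_image.mpr ⟨i, hiIdx, rfl⟩)
      have htt : t * t = 1 := TF_invol h2 ht
      set u := w * t with hudef
      have hut : u * t = w := by rw [hudef, mul_assoc, htt, mul_one]
      have hts : IsSignedPerm (m+1) t := TF_signed h2 ht
      have hus : IsSignedPerm (m+1) u := signed_mul hw hts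
      have htm : t ((m:ℤ)+1) = i := by
        have := dt_self h2 hiIdx
        rwa [show (((m+1:ℕ)):ℤ) = (m:ℤ)+1 by push_cast; ring] at this
      have hufix : u ((m:ℤ)+1) = (m:ℤ)+1 := by
        rw [hudef, Equiv.Perm.mul_apply, htm, hwi]
      have husm : IsSignedPerm m u := signed_down hus hufix
      have hue : eps (m+1) u = 1 := by
        rw [hudef, eps_mul hw hts, (eps_eq_one_iff _ _).mpr he, TF_eps h2 ht, one_mul]
      have huev : Even (NB m u) := by
        have := (eps_eq_one_iff _ _).mp hue
        rwa [NB_succ (by rw [hufix]; omega)] at this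
      rw [DF]
      exact Finset.mem_image.mpr ⟨(u, t),
        Finset.mem_product.mpr ⟨ih u husm huev, ht⟩, hut⟩

lemma DSet_eq_DF (n : ℕ) : DSet n = ↑(DF n) := by
  ext w
  constructor
  · rintro ⟨h1, h2⟩
    exact DSet_subset_DF n w h1 h2
  · intro h
    have h' : w ∈ DF n := h
    exact ⟨DF_signed n w h', (eps_eq_one_iff _ _).mp (DF_even n w h')⟩


/-- In `ℤ[D_n]` (`n ≥ 4`), `Φ_2 Φ_3 ⋯ Φ_n` equals the sum of all elements of `D_n`. -/
theorem phi_factorization_D (n : ℕ) (hn : 4 ≤ n) :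
    ((List.range (n - 1)).map fun j => phiD (j + 2)).prod =
      ∑ᶠ w ∈ DSet n, MonoidAlgebra.of ℤ (Equiv.Perm ℤ) w := by
  rw [DSet_eq_DF, finsum_mem_coe_finset]
  have h := prod_phi (n-1)
  rwa [show n - 1 + 1 = n by omega] at h
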